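/- Correctness of the ancilla-based adder structure: Algorithm 1 — (1) c_i ↦ c_i ⊕ a_i·b_i and b_i ↦ b_i ⊕ a_i for 0 ≤ i ≤ n−1; (2) apply L2⁻¹ to the registers (c_0,...,c_{n−1}) with controls (b_1,...,b_{n−1}); (3) b_{i+1} ↦ b_{i+1} ⊕ c_i, b_i ↦ b_i ⊕ a_i, b_i ↦ b_i ⊕ 1 for 0 ≤ i ≤ n−2; (4) apply L2 to (c_0,...,c_{n−2}) with reversed controls from b; (5) b_i ↦ b_i ⊕ a_i, then c_i ↦ c_i ⊕ a_i·b_i, then b_i ↦ b_i ⊕ 1 for 0 ≤ i ≤ n−2 — maps (a, b, 0^{n−1}, z) to (a, (a+b) mod 2^n, 0^{n−1}, z ⊕ carry), in particular all n−1 ancilla bits return to 0. -/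

import Mathlib

namespace AdderAux

def S (a b : ℕ → ZMod 2) (k : ℕ) : ℕ := ∑ j ∈ Finset.range k, ((a j).val + (b j).val) * 2 ^ j

def cn (a b : ℕ → ZMod 2) (k : ℕ) : ℕ := S a b k / 2 ^ k

def carry (a b : ℕ → ZMod 2) (k : ℕ) : ZMod 2 := (cn a b k : ZMod 2)

lemma S_succ (a b : ℕ → ZMod 2) (k : ℕ) :
    S a b (k+1) = S a b k + ((a k).val + (b k).val) * 2 ^ k := Finset.sum_range_succ _ _

lemma S_lt (a b : ℕ → ZMod 2) : ∀ k, S a b k < 2 ^ (k+1) := by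
  intro k
  induction k with
  | zero => simp [S]
  | succ k ih =>
      rw [S_succ]
      have ha := ZMod.val_lt (a k)
      have hb := ZMod.val_lt (b k)
      have h2 : (0:ℕ) < 2 ^ k := pow_pos (by norm_num) _
      have : ((a k).val + (b k).val) * 2 ^ k ≤ 2 * 2 ^ k := by
        apply Nat.mul_le_mul_right; omega
      have hp : 2 ^ (k+1+1) = 2 ^ (k+1) + 2 * 2^k := by ring
      omega

lemma cn_le (a b : ℕ → ZMod 2) (k : ℕ) : cn a b k ≤ 1 := by
  have := S_lt a b k
  have h2 : (0:ℕ) < 2 ^ k := pow_pos (by norm_num) _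
  unfold cn
  have : S a b k / 2 ^ k < 2 := by
    apply Nat.div_lt_of_lt_mul
    have : 2 ^ (k+1) = 2^k * 2 := by ring
    omega
  omega

lemma cn_zero (a b : ℕ → ZMod 2) : cn a b 0 = 0 := by simp [cn, S]

lemma carry_zero (a b : ℕ → ZMod 2) : carry a b 0 = 0 := by simp [carry, cn_zero]

lemma S_div (a b : ℕ → ZMod 2) (i : ℕ) :
    S a b (i+1) / 2 ^ i = cn a b i + ((a i).val + (b i).val) := by
  have h2 : (0:ℕ) < 2 ^ i := pow_pos (by norm_num) _
  rw [S_succ, Nat.add_mul_div_right _ _ h2]; rfl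

lemma cn_succ (a b : ℕ → ZMod 2) (i : ℕ) :
    cn a b (i+1) = (cn a b i + ((a i).val + (b i).val)) / 2 := by
  unfold cn
  rw [pow_succ, ← Nat.div_div_eq_div_mul, S_div]; rfl

lemma carry_succ (a b : ℕ → ZMod 2) (k : ℕ) :
    carry a b (k+1) = a k * b k + carry a b k * (a k + b k) := by
  have hx : (((a k).val : ℕ) : ZMod 2) = a k := by simp [ZMod.natCast_val, ZMod.cast_id]
  have hy : (((b k).val : ℕ) : ZMod 2) = b k := by simp [ZMod.natCast_val, ZMod.cast_id]
  unfold carry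
  rw [cn_succ, ← hx, ← hy]
  have hc := cn_le a b k
  have hxv := ZMod.val_lt (a k)
  have hyv := ZMod.val_lt (b k)
  generalize cn a b k = c at hc ⊢
  generalize (a k).val = x at hxv ⊢
  generalize (b k).val = y at hyv ⊢
  interval_cases c <;> interval_cases x <;> interval_cases y <;> decide

lemma S_bit (a b : ℕ → ZMod 2) {i k : ℕ} (h : i < k) :
    S a b k / 2 ^ i % 2 = (cn a b i + ((a i).val + (b i).val)) % 2 := by
  have h2 : (0:ℕ) < 2 ^ i := pow_pos (by norm_num) _
  obtain ⟨m, hm⟩ : 2 ^ (i+1) ∣ (S a b k - S a b (i+1)) := by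
    have hsplit : S a b k = S a b (i+1) + ∑ j ∈ Finset.Ico (i+1) k, ((a j).val + (b j).val) * 2 ^ j := by
      unfold S
      rw [Finset.range_eq_Ico, ← Finset.sum_Ico_consecutive _ (Nat.zero_le (i+1)) h, Finset.range_eq_Ico]
    rw [hsplit]
    simp only [Nat.add_sub_cancel_left]
    apply Finset.dvd_sum
    intro j hj
    simp only [Finset.mem_Ico] at hj
    exact Dvd.dvd.mul_left (pow_dvd_pow 2 hj.1) _
  have hmono : S a b (i+1) ≤ S a b k := by
    unfold S
    apply Finset.sum_le_sum_of_subset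
    exact Finset.range_subset_range.mpr h
  have hk : S a b k = S a b (i+1) + 2 ^ i * (2 * m) := by
    have h3 := Nat.eq_add_of_sub_eq hmono hm
    rw [h3]; ring
  rw [hk, Nat.add_mul_div_left _ _ h2, Nat.add_mul_mod_self_left, S_div]

end AdderAux


/-- The inverse-Toffoli-ladder recursion (`L2⁻¹`): `x''_0 = x_0` and
`x''_{i+1} = x_{i+1} ⊕ x''_i·y_i`. -/
def carryProp (x y : ℕ → ZMod 2) : ℕ → ZMod 2
  | 0 => x 0
  | i + 1 => x (i + 1) + carryProp x y i * y i

/-- Correctness of the ancilla-based adder structure (Algorithm 1): it maps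
`(a, b, 0^{n-1}, z)` to `(a, (a+b) mod 2^n, 0^{n-1}, z ⊕ carry)`; in particular all
`n-1` ancilla bits return to `0`.  The ancilla register `C` has `n` bits, the first
`n-1` initialized to `0` and the last one holding `z`. -/
theorem adder_with_ancilla_correct (n : ℕ) (hn : 1 ≤ n) (a b : ℕ → ZMod 2) (z : ZMod 2) :
    -- ancilla register: n-1 zeros and z in the last position
    let C0 : ℕ → ZMod 2 := fun i => if i = n - 1 then z else 0
    -- Slice 1: c_i ↦ c_i ⊕ a_i·b_i and b_i ↦ b_i ⊕ a_i for 0 ≤ i ≤ n-1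
    let C1 : ℕ → ZMod 2 := fun i => if i + 1 ≤ n then C0 i + a i * b i else C0 i
    let B1 : ℕ → ZMod 2 := fun i => if i + 1 ≤ n then b i + a i else b i
    -- Slice 2: inverse Toffoli ladder L2⁻¹ on (c_0, ..., c_{n-1}) with controls (b_1, ..., b_{n-1})
    let C2 : ℕ → ZMod 2 := carryProp C1 (fun i => B1 (i + 1))
    -- Slice 3: b_{i+1} ↦ b_{i+1} ⊕ c_i, b_i ↦ b_i ⊕ a_i, b_i ↦ b_i ⊕ 1 for 0 ≤ i ≤ n-2
    let B2 : ℕ → ZMod 2 := fun j =>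
      B1 j + (if 1 ≤ j ∧ j + 1 ≤ n then C2 (j - 1) else 0) +
        (if j + 2 ≤ n then a j + 1 else 0)
    -- Slice 4: Toffoli ladder L2 on (c_0, ..., c_{n-2}) with controls (b_1, ..., b_{n-2})
    let C3 : ℕ → ZMod 2 := fun i =>
      if 1 ≤ i ∧ i + 2 ≤ n then C2 i + C2 (i - 1) * B2 i else C2 i
    -- Slice 5: b_i ↦ b_i ⊕ a_i, then c_i ↦ c_i ⊕ a_i·b_i, then b_i ↦ b_i ⊕ 1, for 0 ≤ i ≤ n-2
    let B3 : ℕ → ZMod 2 := fun i => if i + 2 ≤ n then B2 i + a i else B2 i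
    let C4 : ℕ → ZMod 2 := fun i => if i + 2 ≤ n then C3 i + a i * B3 i else C3 i
    let B4 : ℕ → ZMod 2 := fun i => if i + 2 ≤ n then B3 i + 1 else B3 i
    -- the represented integers
    let va : ℕ := ∑ i ∈ Finset.range n, (a i).val * 2 ^ i
    let vb : ℕ := ∑ i ∈ Finset.range n, (b i).val * 2 ^ i
    -- final state: ancillas restored to 0, b holds (a+b) mod 2^n, z is XORed with the carry
    (∀ i, i + 1 < n → C4 i = 0) ∧
    (C4 (n - 1) = z + if (va + vb).testBit n then 1 else 0) ∧
    (∀ i < n, (B4 i).val = (va + vb) % 2 ^ n / 2 ^ i % 2) := by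
  obtain ⟨m, rfl⟩ : ∃ m, n = m + 1 := ⟨n - 1, by omega⟩
  intro C0 C1 B1 C2 B2 C3 B3 C4 B4 va vb
  simp only [Nat.add_sub_cancel] at *
  have hvavb : va + vb = AdderAux.S a b (m+1) := by
    simp only [va, vb, AdderAux.S, add_mul, Finset.sum_add_distrib]
  -- characterization of C2
  have hC2 : ∀ i, i + 1 ≤ m + 1 → C2 i = AdderAux.carry a b (i+1) + (if i = m then z else 0) := by
    intro i
    induction i with
    | zero =>
        intro h
        simp only [C2, carryProp, C1, C0, Nat.add_sub_cancel]
        rw [if_pos h, AdderAux.carry_succ, AdderAux.carry_zero]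
        ring
    | succ i ih =>
        intro h
        have hi : i + 1 ≤ m + 1 := by omega
        have hne : ¬ (i = m) := by omega
        simp only [C2, carryProp] at ih ⊢
        rw [ih hi, if_neg hne, add_zero]
        simp only [C1, C0, B1, Nat.add_sub_cancel]
        rw [if_pos h, if_pos h, AdderAux.carry_succ a b (i+1)]
        ring
  have hC2' : ∀ i, i + 2 ≤ m + 1 → C2 i = AdderAux.carry a b (i+1) := by
    intro i h
    rw [hC2 i (by omega), if_neg (by omega), add_zero]
  -- characterization of B2
  have hB2 : ∀ i, i + 2 ≤ m + 1 → B2 i = a i + b i + AdderAux.carry a b i + a i + 1 := by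
    intro i h
    match i with
    | 0 =>
        simp only [B2, B1]
        rw [if_pos (by omega : (0:ℕ) + 1 ≤ m + 1), if_neg (by omega), if_pos h,
          AdderAux.carry_zero]
        ring
    | j + 1 =>
        simp only [B2, B1, Nat.add_sub_cancel]
        rw [if_pos (by omega : j + 1 + 1 ≤ m + 1), if_pos ⟨by omega, by omega⟩, if_pos h,
          hC2' j (by omega)]
        ring
  have hB2top : B2 m = a m + b m + AdderAux.carry a b m := by
    by_cases hm : m = 0
    · subst hm
      simp only [B2, B1]
      rw [if_pos (by omega : (0:ℕ) + 1 ≤ 0 + 1), if_neg (by omega), if_neg (by omega),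
        AdderAux.carry_zero]
      ring
    · simp only [B2, B1]
      rw [if_pos (by omega : m + 1 ≤ m + 1), if_pos ⟨by omega, by omega⟩, if_neg (by omega),
        hC2' (m-1) (by omega), show m - 1 + 1 = m from by omega]
      ring
  refine ⟨?_, ?_, ?_⟩
  · -- ancillas return to zero
    intro i hi
    have h2 : i + 2 ≤ m + 1 := by omega
    simp only [C4, C3, B3]
    rw [if_pos h2, if_pos h2]
    have hrec := AdderAux.carry_succ a b i
    match i with
    | 0 =>
        rw [if_neg (by omega), hC2' 0 (by omega), hB2 0 (by omega)]
        have h0 := AdderAux.carry_zero a b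
        generalize AdderAux.carry a b 1 = c' at hrec ⊢
        generalize AdderAux.carry a b 0 = c at hrec h0 ⊢
        generalize a 0 = A at hrec ⊢
        generalize b 0 = B at hrec ⊢
        revert hrec h0; revert A B c c'; decide
    | j + 1 =>
        rw [if_pos ⟨by omega, by omega⟩, Nat.add_sub_cancel, hC2' (j+1) h2,
          hC2' j (by omega), hB2 (j+1) h2]
        have hrec := AdderAux.carry_succ a b (j+1)
        generalize AdderAux.carry a b (j+1+1) = c' at hrec ⊢
        generalize AdderAux.carry a b (j+1) = c at hrec ⊢
        generalize a (j+1) = A at hrec ⊢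
        generalize b (j+1) = B at hrec ⊢
        revert hrec; revert A B c c'; decide
  · -- carry bit
    simp only [C4, C3]
    rw [if_neg (by omega), if_neg (by omega : ¬ (1 ≤ m ∧ m + 2 ≤ m + 1))]
    rw [hC2 m (by omega), if_pos rfl]
    rw [hvavb, Nat.testBit_eq_decide_div_mod_eq]
    rw [show AdderAux.S a b (m+1) / 2 ^ (m+1) % 2 = AdderAux.cn a b (m+1) % 2 from rfl]
    have hle := AdderAux.cn_le a b (m+1)
    unfold AdderAux.carry
    generalize AdderAux.cn a b (m+1) = c at hle ⊢
    interval_cases c <;> simp <;> ring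
  · -- sum bits
    intro i hi
    rw [hvavb]
    have hdvd : (2:ℕ) ^ i * 2 ∣ 2 ^ (m+1) := by
      rw [← pow_succ]; exact pow_dvd_pow 2 (by omega)
    rw [← Nat.mod_mul_right_div_self, Nat.mod_mod_of_dvd _ hdvd, Nat.mod_mul_right_div_self]
    rw [AdderAux.S_bit a b hi]
    have hx : (((a i).val : ℕ) : ZMod 2) = a i := by simp [ZMod.natCast_val, ZMod.cast_id]
    have hy : (((b i).val : ℕ) : ZMod 2) = b i := by simp [ZMod.natCast_val, ZMod.cast_id]
    have hc := AdderAux.cn_le a b i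
    have hxv := ZMod.val_lt (a i)
    have hyv := ZMod.val_lt (b i)
    by_cases h2 : i + 2 ≤ m + 1
    · simp only [B4, B3]
      rw [if_pos h2, if_pos h2, hB2 i h2]
      unfold AdderAux.carry
      rw [← hx, ← hy]
      generalize AdderAux.cn a b i = c at hc ⊢
      generalize (a i).val = x at hxv ⊢
      generalize (b i).val = y at hyv ⊢
      interval_cases c <;> interval_cases x <;> interval_cases y <;> decide
    · have him : i = m := by omega
      subst him
      simp only [B4, B3]
      rw [if_neg h2, if_neg h2, hB2top]
      unfold AdderAux.carry
      rw [← hx, ← hy]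
      generalize AdderAux.cn a b i = c at hc ⊢
      generalize (a i).val = x at hxv ⊢
      generalize (b i).val = y at hyv ⊢
      interval_cases c <;> interval_cases x <;> interval_cases y <;> decide
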